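/- Let C(r) = B̂^av(r) ∩ C for r ≥ γℓ, and let C^π(r) be the multiset of punctured representatives { π(x) : x+K ∈ C(r) } ⊆ 𝒜^{s−ℓ}. Then |C(r)|(|C(r)|−1)(d − γℓ) ≤ ∑_{u,v ∈ C^π(r)} w(u − v). -/
import Mathlib


open Finset MulOpposite
open scoped Classical BigOperators

/-- with `C(r) = B̂^av(r) ∩ C` (for `r ≥ γℓ`) and `C^π(r)` the multiset
of representatives punctured on `supp K`,
`|C(r)|(|C(r)|−1)(d − γℓ) ≤ ∑_{u,v ∈ C^π(r)} w(u − v)`. -/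
theorem stmt15 {R A : Type*} [Ring R] [Fintype R] [DecidableEq R]
    [AddCommGroup A] [Module R A] [Module Rᵐᵒᵖ A] [SMulCommClass R Rᵐᵒᵖ A] [Fintype A]
    (χ : AddChar A ℂ)
    (hgenL : ∀ N : Submodule R A, (∀ x ∈ N, χ x = 1) → N = ⊥)
    (hgenR : ∀ N : Submodule Rᵐᵒᵖ A, (∀ x ∈ N, χ x = 1) → N = ⊥)
    (hcard : Fintype.card A = Fintype.card R)
    (γ : ℝ) (w : A → ℝ)
    (hw : ∀ a : A, (w a : ℂ) =
      (γ : ℂ) * (1 - (Fintype.card Rˣ : ℂ)⁻¹ * ∑ u : Rˣ, χ (op (u : R) • a)))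
    (s ℓ : ℕ) (K : Submodule R (Fin s → A))
    (hKright : ∀ (r : R), ∀ z ∈ K, (op r • z : Fin s → A) ∈ K)
    (hℓ : (univ.filter fun i : Fin s => ∃ z ∈ K, z i ≠ 0).card = ℓ)
    (C : Finset ((Fin s → A) ⧸ K))
    (d : ℝ)
    (hd_le : ∀ c ∈ C, ∀ c' ∈ C, c ≠ c' → ∀ z : Fin s → A,
      (Submodule.Quotient.mk z : (Fin s → A) ⧸ K) = c - c' → d ≤ ∑ i, w (z i))
    (hd_ex : ∃ c ∈ C, ∃ c' ∈ C, c ≠ c' ∧ ∃ z : Fin s → A,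
      (Submodule.Quotient.mk z : (Fin s → A) ⧸ K) = c - c' ∧ ∑ i, w (z i) = d)
    (r : ℝ) (hr : γ * ℓ ≤ r) :
    ∀ Cr : Finset ((Fin s → A) ⧸ K),
      Cr = (C.filter fun q => ∃ z : Fin s → A,
          (Submodule.Quotient.mk z : (Fin s → A) ⧸ K) = q ∧
            (Nat.card K : ℝ)⁻¹ * ∑ k : K, ∑ i, w (z i + (k : Fin s → A) i) ≤ r) →
      (Cr.card : ℝ) * ((Cr.card : ℝ) - 1) * (d - γ * ℓ) ≤
        ∑ c ∈ Cr, ∑ c' ∈ Cr,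
          ∑ i ∈ univ \ (univ.filter fun i : Fin s => ∃ z ∈ K, z i ≠ 0),
            w ((Quotient.out c) i - (Quotient.out c') i) := by
  intro Cr hCr
  classical
  set S : Finset (Fin s) := univ.filter (fun i : Fin s => ∃ z ∈ K, z i ≠ 0) with hSdef
  have hcRne : (Fintype.card Rˣ : ℂ) ≠ 0 := Nat.cast_ne_zero.mpr Fintype.card_ne_zero
  -- w 0 = 0
  have hw0 : w 0 = 0 := by
    have h := hw 0
    have h2 : ((w 0 : ℝ) : ℂ) = 0 := by
      rw [h]
      simp [Finset.sum_const, card_univ, mul_comm, inv_mul_cancel₀ hcRne]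
    exact_mod_cast h2
  have hKpos : (0:ℝ) < (Fintype.card K : ℝ) := by exact_mod_cast Fintype.card_pos
  have hKne : (Fintype.card K : ℝ) ≠ 0 := ne_of_gt hKpos
  -- character sums over K vanish on support coordinates
  have hT0 : ∀ i ∈ S, ∀ u : Rˣ,
      ∑ k : K, χ (op (u:R) • (k : Fin s → A) i) = 0 := by
    intro i hi u
    rw [hSdef, Finset.mem_filter] at hi
    obtain ⟨-, z, hzK, hzi⟩ := hi
    by_cases hone : ∀ k : K, χ (op (u:R) • (k : Fin s → A) i) = 1
    · exfalso
      let f : A →ₗ[R] A :=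
        { toFun := fun a => op (u:R) • a
          map_add' := fun a b => smul_add _ a b
          map_smul' := fun r a => (smul_comm r (op (u:R)) a).symm }
      set N : Submodule R A := (K.map (LinearMap.proj i)).map f with hN
      have hNbot : N = ⊥ := by
        apply hgenL
        rintro x hx
        rw [hN, Submodule.mem_map] at hx
        obtain ⟨a, ha, rfl⟩ := hx
        rw [Submodule.mem_map] at ha
        obtain ⟨k, hk, rfl⟩ := ha
        exact hone ⟨k, hk⟩
      have hmem : f (z i) ∈ N := by
        apply Submodule.mem_map_of_mem
        exact Submodule.mem_map_of_mem hzK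
      rw [hNbot, Submodule.mem_bot] at hmem
      apply hzi
      have : op ((u⁻¹ : Rˣ) : R) • (op ((u : Rˣ) : R) • z i) = z i := by
        rw [smul_smul, ← op_mul, Units.mul_inv, op_one, one_smul]
      rw [← this]
      show op ((u⁻¹ : Rˣ) : R) • f (z i) = 0
      rw [hmem, smul_zero]
    · push_neg at hone
      obtain ⟨k₀, hk₀⟩ := hone
      have hshift : ∑ k : K, χ (op (u:R) • ((k₀ + k : K) : Fin s → A) i)
          = ∑ k : K, χ (op (u:R) • (k : Fin s → A) i) :=
        Fintype.sum_equiv (Equiv.addLeft k₀) _ _ (fun k => by simp)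
      have hexp : ∀ k : K, χ (op (u:R) • ((k₀ + k : K) : Fin s → A) i)
          = χ (op (u:R) • (k₀ : Fin s → A) i) * χ (op (u:R) • (k : Fin s → A) i) := by
        intro k
        have : ((k₀ + k : K) : Fin s → A) i = (k₀ : Fin s → A) i + (k : Fin s → A) i := rfl
        rw [this, smul_add, AddChar.map_add_eq_mul]
      rw [Finset.sum_congr rfl (fun k _ => hexp k), ← Finset.mul_sum] at hshift
      have := sub_eq_zero.mpr hshift
      rw [← sub_one_mul] at this
      rcases mul_eq_zero.mp this with h | h
      · exact absurd (sub_eq_zero.mp h) hk₀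
      · exact h
  -- average over K on support coordinates
  have hSsum : ∀ i ∈ S, ∀ a : A,
      ∑ k : K, w (a + (k : Fin s → A) i) = (Fintype.card K : ℝ) * γ := by
    intro i hi a
    have key : ∀ u : Rˣ,
        ∑ k : K, χ (op (u:R) • a) * χ (op (u:R) • (k : Fin s → A) i) = 0 := by
      intro u
      rw [← Finset.mul_sum, hT0 i hi u, mul_zero]
    have hc : ((∑ k : K, w (a + (k : Fin s → A) i) : ℝ) : ℂ)
        = (((Fintype.card K : ℝ) * γ : ℝ) : ℂ) := by
      push_cast
      calc (∑ k : K, (w (a + (k : Fin s → A) i) : ℂ))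
          = ∑ k : K, (γ : ℂ) * (1 - (Fintype.card Rˣ : ℂ)⁻¹ *
              ∑ u : Rˣ, χ (op (u:R) • a) * χ (op (u:R) • (k : Fin s → A) i)) := by
            refine Finset.sum_congr rfl fun k _ => ?_
            rw [hw]
            simp_rw [smul_add, AddChar.map_add_eq_mul]
        _ = (γ : ℂ) * ∑ k : K, (1 - (Fintype.card Rˣ : ℂ)⁻¹ *
              ∑ u : Rˣ, χ (op (u:R) • a) * χ (op (u:R) • (k : Fin s → A) i)) := by
            rw [Finset.mul_sum]
        _ = (γ : ℂ) * (Fintype.card K : ℂ) := by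
            congr 1
            rw [Finset.sum_sub_distrib, ← Finset.mul_sum, Finset.sum_comm]
            simp [key, card_univ]
        _ = ((Fintype.card K : ℕ) : ℂ) * (γ : ℂ) := by ring
    exact_mod_cast hc
  -- off support, K contributes nothing
  have hNsum : ∀ i ∈ univ \ S, ∀ a : A,
      ∑ k : K, w (a + (k : Fin s → A) i) = (Fintype.card K : ℝ) * w a := by
    intro i hi a
    have hiS : i ∉ S := (Finset.mem_sdiff.mp hi).2
    rw [hSdef, Finset.mem_filter] at hiS
    push_neg at hiS
    have hzero : ∀ k : K, (k : Fin s → A) i = 0 := fun k =>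
      hiS (Finset.mem_univ i) k k.2
    simp [hzero, Finset.sum_const, card_univ, nsmul_eq_mul]
  -- the coset average weight formula
  have havg : ∀ z : Fin s → A,
      (Nat.card K : ℝ)⁻¹ * ∑ k : K, ∑ i, w (z i + (k : Fin s → A) i)
        = γ * ℓ + ∑ i ∈ univ \ S, w (z i) := by
    intro z
    rw [Nat.card_eq_fintype_card, Finset.sum_comm]
    have hsplit : (∑ i ∈ univ \ S, ∑ k : K, w (z i + (k : Fin s → A) i))
        + ∑ i ∈ S, ∑ k : K, w (z i + (k : Fin s → A) i)
        = ∑ i, ∑ k : K, w (z i + (k : Fin s → A) i) :=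
      Finset.sum_sdiff (Finset.subset_univ S)
    have h1 : ∑ i ∈ S, ∑ k : K, w (z i + (k : Fin s → A) i)
        = (Fintype.card K : ℝ) * (γ * ℓ) := by
      rw [Finset.sum_congr rfl (fun i hi => hSsum i hi (z i)), Finset.sum_const]
      have : S.card = ℓ := hℓ
      rw [this, nsmul_eq_mul]
      ring
    have h2 : ∑ i ∈ univ \ S, ∑ k : K, w (z i + (k : Fin s → A) i)
        = (Fintype.card K : ℝ) * ∑ i ∈ univ \ S, w (z i) := by
      rw [Finset.sum_congr rfl (fun i hi => hNsum i hi (z i)), ← Finset.mul_sum]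
    rw [← hsplit, h1, h2]
    field_simp
    ring
  -- pairwise bound
  have hCrC : Cr ⊆ C := by rw [hCr]; exact Finset.filter_subset _ _
  have hpair : ∀ c ∈ Cr, ∀ c' ∈ Cr, c ≠ c' →
      d - γ * ℓ ≤ ∑ i ∈ univ \ S, w ((Quotient.out c) i - (Quotient.out c') i) := by
    intro c hc c' hc' hne
    set z : Fin s → A := Quotient.out c - Quotient.out c' with hz
    have hmk : (Submodule.Quotient.mk z : (Fin s → A) ⧸ K) = c - c' := by
      rw [hz, Submodule.Quotient.mk_sub]
      congr 1 <;> exact Quotient.out_eq _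
    have hble : ∀ k : K, d ≤ ∑ i, w (z i + (k : Fin s → A) i) := by
      intro k
      have hmk2 : (Submodule.Quotient.mk (z + (k : Fin s → A)) : (Fin s → A) ⧸ K)
          = c - c' := by
        rw [Submodule.Quotient.mk_add, (Submodule.Quotient.mk_eq_zero K).mpr k.2,
          add_zero, hmk]
      simpa using hd_le c (hCrC hc) c' (hCrC hc') hne _ hmk2
    have hsum : (Fintype.card K : ℝ) * d ≤ ∑ k : K, ∑ i, w (z i + (k : Fin s → A) i) := by
      have := Finset.card_nsmul_le_sum Finset.univ
        (fun k : K => ∑ i, w (z i + (k : Fin s → A) i)) d (fun k _ => hble k)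
      simpa [card_univ, nsmul_eq_mul] using this
    have hd2 : d ≤ γ * ℓ + ∑ i ∈ univ \ S, w (z i) := by
      rw [← havg z, Nat.card_eq_fintype_card, inv_mul_eq_div, le_div_iff₀ hKpos]
      linarith [hsum]
    have : ∑ i ∈ univ \ S, w (z i)
        = ∑ i ∈ univ \ S, w ((Quotient.out c) i - (Quotient.out c') i) := by
      refine Finset.sum_congr rfl fun i _ => ?_
      rw [hz]; rfl
    linarith [hd2, this.symm.le, this.le]
  -- diagonal terms vanish
  have hdiag : ∀ c : (Fin s → A) ⧸ K,
      ∑ i ∈ univ \ S, w ((Quotient.out c) i - (Quotient.out c) i) = 0 := by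
    intro c; simp [hw0]
  have hsplit2 : ∀ c ∈ Cr,
      ∑ c' ∈ Cr, ∑ i ∈ univ \ S, w ((Quotient.out c) i - (Quotient.out c') i)
      = ∑ c' ∈ Cr.erase c, ∑ i ∈ univ \ S,
          w ((Quotient.out c) i - (Quotient.out c') i) := by
    intro c hc
    rw [← Finset.add_sum_erase Cr _ hc, hdiag c, zero_add]
  rcases Finset.eq_empty_or_nonempty Cr with hE | hNE
  · simp [hE]
  · have hn1 : 1 ≤ Cr.card := Finset.card_pos.mpr hNE
    have hbound : ∀ c ∈ Cr, ((Cr.card : ℝ) - 1) * (d - γ * ℓ)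
        ≤ ∑ c' ∈ Cr.erase c, ∑ i ∈ univ \ S,
            w ((Quotient.out c) i - (Quotient.out c') i) := by
      intro c hc
      have hcard' := Finset.card_nsmul_le_sum (Cr.erase c)
        (fun c' => ∑ i ∈ univ \ S, w ((Quotient.out c) i - (Quotient.out c') i))
        (d - γ * ℓ)
        (fun c' hc' => hpair c hc c' (Finset.mem_of_mem_erase hc')
          (Finset.ne_of_mem_erase hc').symm)
      rwa [Finset.card_erase_of_mem hc, nsmul_eq_mul, Nat.cast_sub hn1,
        Nat.cast_one] at hcard'
    calc (Cr.card : ℝ) * ((Cr.card : ℝ) - 1) * (d - γ * ℓ)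
        = ∑ _c ∈ Cr, ((Cr.card : ℝ) - 1) * (d - γ * ℓ) := by
          rw [Finset.sum_const, nsmul_eq_mul]; ring
      _ ≤ ∑ c ∈ Cr, ∑ c' ∈ Cr.erase c, ∑ i ∈ univ \ S,
            w ((Quotient.out c) i - (Quotient.out c') i) :=
          Finset.sum_le_sum hbound
      _ = ∑ c ∈ Cr, ∑ c' ∈ Cr, ∑ i ∈ univ \ S,
            w ((Quotient.out c) i - (Quotient.out c') i) :=
          (Finset.sum_congr rfl hsplit2).symm
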